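/- Let r be a positive integer, let G' be a correctly gadgeted graph for parameter r, and let χ : V(G') → ℕ be a labeling that is a distance-2 coloring and is edge-consistent in every r-gball. Let v be an original vertex of G'. Then for every inner or outer vertex u in gball_r(v), χ(u) ≠ χ(v). -/

import Mathlib

open scoped ENNReal

namespace LCLGadget

/-- Adjacency relation (one direction) of the A-gadget, on vertex indices `0,…,5`
representing the paper's vertices `1,…,6`. -/
def AAdj (i j : Fin 6) : Prop :=
  (i, j) ∈ ([(0,1),(0,2),(1,2),(1,3),(2,4),(3,4),(3,5),(4,5)] : List (Fin 6 × Fin 6))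

variable {V : Type} [LinearOrder V]

/-- The gadget vertices of the gadgeted graph `gadget(G, x)`: a vertex `⟨(a,b,i,j), _⟩`
is vertex `j` of the `i`-th A-gadget on the expanded edge replacing the edge `{a,b}`
(oriented so that `a < b`). -/
abbrev GadgetAux (G : SimpleGraph V) (x : Sym2 V → ℕ) : Type :=
  {p : V × V × ℕ × Fin 6 //
    p.1 < p.2.1 ∧ G.Adj p.1 p.2.1 ∧ p.2.2.1 < x s(p.1, p.2.1)}

/-- Vertices of the gadgeted graph: original vertices (`Sum.inl`) and gadget
vertices (`Sum.inr`). -/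
abbrev GadgetVert (G : SimpleGraph V) (x : Sym2 V → ℕ) : Type :=
  V ⊕ GadgetAux G x

/-- Base adjacency relation of the gadgeted graph (to be symmetrized):
vertex `0` (paper's `1`) of the first gadget is joined to the smaller endpoint,
vertex `5` (paper's `6`) of the last gadget is joined to the larger endpoint,
within one gadget the A-gadget edges are used, and consecutive gadgets of a chain
are joined by an edge from vertex `5` to vertex `0`. -/
def gadgetRel (G : SimpleGraph V) (x : Sym2 V → ℕ) :
    GadgetVert G x → GadgetVert G x → Prop
  | Sum.inl sv, Sum.inr ⟨⟨a, b, i, j⟩, _⟩ =>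
      (sv = a ∧ i = 0 ∧ j = 0) ∨ (sv = b ∧ i = x s(a, b) - 1 ∧ j = 5)
  | Sum.inr ⟨⟨a, b, i, j⟩, _⟩, Sum.inr ⟨⟨a', b', i', j'⟩, _⟩ =>
      a = a' ∧ b = b' ∧ ((i = i' ∧ AAdj j j') ∨ (i' = i + 1 ∧ j = 5 ∧ j' = 0))
  | _, _ => False

/-- The gadgeted graph `G' = gadget(G, x)`. -/
def gadgetGraph (G : SimpleGraph V) (x : Sym2 V → ℕ) : SimpleGraph (GadgetVert G x) :=
  SimpleGraph.fromRel (gadgetRel G x)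

/-- Weight of a (potential) edge of the gadgeted graph: `1/2` if it is incident to an
original vertex, `0` otherwise. -/
noncomputable def wt (G : SimpleGraph V) (x : Sym2 V → ℕ) :
    GadgetVert G x → GadgetVert G x → ℝ≥0∞
  | Sum.inl _, _ => 1/2
  | _, Sum.inl _ => 1/2
  | _, _ => 0

/-- The gadgeted distance `gdist(u,v)`: the minimum total weight of a path
from `u` to `v` in the gadgeted graph. -/
noncomputable def gdist (G : SimpleGraph V) (x : Sym2 V → ℕ) (u v : GadgetVert G x) : ℝ≥0∞ :=
  ⨅ p : (gadgetGraph G x).Walk u v,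
    (p.darts.map fun d => wt G x d.toProd.1 d.toProd.2).sum

/-- Membership of a vertex `u` in the `r`-gball around `c`. -/
def inGball (G : SimpleGraph V) (x : Sym2 V → ℕ) (r : ℕ) (c u : GadgetVert G x) : Prop :=
  gdist G x c u ≤ (r : ℝ≥0∞)

/-- `u` is an original vertex of the gadgeted graph. -/
def IsOriginal (G : SimpleGraph V) (x : Sym2 V → ℕ) (u : GadgetVert G x) : Prop :=
  ∃ v : V, u = Sum.inl v

/-- `u` is an outer vertex: a gadget vertex adjacent to an original vertex. -/
def IsOuter (G : SimpleGraph V) (x : Sym2 V → ℕ) (u : GadgetVert G x) : Prop :=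
  (∃ p, u = Sum.inr p) ∧ ∃ w, IsOriginal G x w ∧ (gadgetGraph G x).Adj u w

/-- `u` is an inner vertex: a gadget vertex not adjacent to any original vertex. -/
def IsInner (G : SimpleGraph V) (x : Sym2 V → ℕ) (u : GadgetVert G x) : Prop :=
  (∃ p, u = Sum.inr p) ∧ ¬ ∃ w, IsOriginal G x w ∧ (gadgetGraph G x).Adj u w

/-- `G` is a 3-regular graph. -/
def ThreeRegular (G : SimpleGraph V) : Prop :=
  ∀ v : V, (G.neighborSet v).ncard = 3

/-- The edge labeling `x` takes positive values on all edges. -/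
def PosLabels (G : SimpleGraph V) (x : Sym2 V → ℕ) : Prop :=
  ∀ e ∈ G.edgeSet, 0 < x e

/-- `x` is a distance-`2r` edge coloring of `G`: any two distinct edges of `G` at
distance at most `2r` from each other receive distinct labels. -/
def DistEdgeColoring (G : SimpleGraph V) (x : Sym2 V → ℕ) (r : ℕ) : Prop :=
  ∀ e ∈ G.edgeSet, ∀ f ∈ G.edgeSet, e ≠ f →
    (∃ a ∈ e, ∃ b ∈ f, G.edist a b ≤ (2 * r : ℕ)) → x e ≠ x f

/-- The gadgeted graph `gadget(G,x)` is correctly gadgeted for parameter `r`. -/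
def CorrectlyGadgeted (G : SimpleGraph V) (x : Sym2 V → ℕ) (r : ℕ) : Prop :=
  ThreeRegular G ∧ PosLabels G x ∧ DistEdgeColoring G x r

/-- `χ` is a distance-2 coloring of the gadgeted graph:
it is injective on `{v} ∪ N(v)` for every vertex `v`. -/
def Dist2Coloring (G : SimpleGraph V) (x : Sym2 V → ℕ) (χ : GadgetVert G x → ℕ) : Prop :=
  ∀ v : GadgetVert G x, Set.InjOn χ (insert v ((gadgetGraph G x).neighborSet v))

/-- `χ` is edge-consistent in every `r`-gball: whenever `{v,u}` is an edge and
`v' ∈ gball_r(v)` has `χ(v') = χ(v)`, there is a neighbor `u'` of `v'` with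
`χ(u') = χ(u)`. -/
def EdgeConsistent (G : SimpleGraph V) (x : Sym2 V → ℕ) (r : ℕ)
    (χ : GadgetVert G x → ℕ) : Prop :=
  ∀ v u : GadgetVert G x, (gadgetGraph G x).Adj v u →
    ∀ v', inGball G x r v v' → χ v' = χ v →
      ∃ u', (gadgetGraph G x).Adj v' u' ∧ χ u' = χ u

/-- `u` lies on a triangle (cycle of length 3) of the gadgeted graph. -/
def OnTriangle (G : SimpleGraph V) (x : Sym2 V → ℕ) (u : GadgetVert G x) : Prop :=
  ∃ a b, (gadgetGraph G x).Adj u a ∧ (gadgetGraph G x).Adj u b ∧ (gadgetGraph G x).Adj a b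

end LCLGadget

namespace LCLGadgetThms
open LCLGadget

variable {V : Type} [LinearOrder V]


variable {V : Type} [LinearOrder V]

noncomputable def wW (G : SimpleGraph V) (x : Sym2 V → ℕ) {a b : GadgetVert G x}
    (p : (gadgetGraph G x).Walk a b) : ℝ≥0∞ :=
  (p.darts.map fun d => wt G x d.toProd.1 d.toProd.2).sum

variable {G : SimpleGraph V} {x : Sym2 V → ℕ}

lemma not_adj_inl_inl (s t : V) : ¬ (gadgetGraph G x).Adj (Sum.inl s) (Sum.inl t) := by
  intro h
  rw [gadgetGraph, SimpleGraph.fromRel_adj] at h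
  exact h.2.elim id id

noncomputable def half : ℝ≥0∞ := 2⁻¹

lemma wt_inl_left (s : V) (b : GadgetVert G x) : wt G x (Sum.inl s) b = half := by
  rcases b with b | b <;> simp [wt, half, one_div]

lemma wt_inl_right (s : V) (b : GadgetVert G x) : wt G x b (Sum.inl s) = half := by
  rcases b with b | b <;> simp [wt, half, one_div]

lemma wt_inr_inr (p q : GadgetAux G x) : wt G x (Sum.inr p) (Sum.inr q) = 0 := rfl

/-- every walk has weight `n * half` where `n` has parity given by endpoints -/
lemma wW_parity {a b : GadgetVert G x} (p : (gadgetGraph G x).Walk a b) :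
    ∃ n : ℕ, wW G x p = n * half ∧ (n % 2 = if a.isLeft = b.isLeft then 0 else 1) := by
  induction p with
  | nil => exact ⟨0, by simp [wW], by simp⟩
  | @cons a b c h q ih =>
    obtain ⟨m, hm, hpar⟩ := ih
    have hcons : wW G x (SimpleGraph.Walk.cons h q) = wt G x a b + wW G x q := by
      simp [wW, SimpleGraph.Walk.darts_cons]
    rcases a with a | a <;> rcases b with b | b
    · exact absurd h (not_adj_inl_inl a b)
    · refine ⟨m + 1, ?_, ?_⟩
      · rw [hcons, hm, wt_inl_left]; push_cast; ring
      · simp only [Sum.isLeft] at hpar ⊢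
        rcases c with c | c <;> simp_all <;> omega
    · refine ⟨m + 1, ?_, ?_⟩
      · rw [hcons, hm, wt_inl_right]; push_cast; ring
      · simp only [Sum.isLeft] at hpar ⊢
        rcases c with c | c <;> simp_all <;> omega
    · refine ⟨m, ?_, ?_⟩
      · rw [hcons, hm, wt_inr_inr]; simp
      · simpa using hpar


lemma gdist_eq' (a b : GadgetVert G x) :
    gdist G x a b = ⨅ p : (gadgetGraph G x).Walk a b, wW G x p := rfl

lemma gdist_le' {a b : GadgetVert G x} (p : (gadgetGraph G x).Walk a b) :
    gdist G x a b ≤ wW G x p := iInf_le _ p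

lemma half_ne_zero : (half : ℝ≥0∞) ≠ 0 := by simp [half]
lemma half_ne_top : (half : ℝ≥0∞) ≠ ⊤ := by simp [half]

lemma two_mul_half : (2 : ℝ≥0∞) * half = 1 :=
  ENNReal.mul_inv_cancel (by norm_num) (by norm_num)

lemma nat_cast_eq_mul_half (r : ℕ) : (r : ℝ≥0∞) = (2 * r : ℕ) * half := by
  push_cast
  rw [mul_comm (2 : ℝ≥0∞) (r : ℝ≥0∞), mul_assoc, two_mul_half, mul_one]

lemma gdist_add_half_le {v : V} {q : GadgetAux G x} {r : ℕ} (hr : 1 ≤ r)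
    (h : gdist G x (Sum.inl v) (Sum.inr q) ≤ r) :
    gdist G x (Sum.inl v) (Sum.inr q) + half ≤ r := by
  have hlt : gdist G x (Sum.inl v) (Sum.inr q) < (r : ℝ≥0∞) + half :=
    lt_of_le_of_lt h (ENNReal.lt_add_right (by simp) half_ne_zero)
  rw [gdist_eq', iInf_lt_iff] at hlt
  obtain ⟨p, hp⟩ := hlt
  obtain ⟨n, hn, hpar⟩ := wW_parity p
  have hodd : n % 2 = 1 := by simpa using hpar
  have hrh : (r : ℝ≥0∞) + half = ((2 * r + 1 : ℕ) : ℝ≥0∞) * half := by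
    rw [nat_cast_eq_mul_half r]; push_cast; ring
  have hnlt : n < 2 * r + 1 := by
    rw [hn, hrh] at hp
    have := lt_of_mul_lt_mul_right hp (zero_le (a := half))
    exact_mod_cast this
  have hn1 : n + 1 ≤ 2 * r := by omega
  calc gdist G x (Sum.inl v) (Sum.inr q) + half ≤ wW G x p + half := by
        exact add_le_add_left (gdist_le' p) half
    _ = ((n + 1 : ℕ) : ℝ≥0∞) * half := by rw [hn]; push_cast; ring
    _ ≤ ((2 * r : ℕ) : ℝ≥0∞) * half := by
        exact mul_le_mul_left (by exact_mod_cast hn1) half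
    _ = (r : ℝ≥0∞) := (nat_cast_eq_mul_half r).symm


lemma wt_symm' (a b : GadgetVert G x) : wt G x a b = wt G x b a := by
  rcases a with a | a <;> rcases b with b | b <;> rfl

lemma wW_append' {a b c : GadgetVert G x}
    (p : (gadgetGraph G x).Walk a b) (q : (gadgetGraph G x).Walk b c) :
    wW G x (p.append q) = wW G x p + wW G x q := by
  simp [wW, SimpleGraph.Walk.darts_append]

lemma wW_reverse' {a b : GadgetVert G x}
    (p : (gadgetGraph G x).Walk a b) : wW G x p.reverse = wW G x p := by
  induction p with
  | nil => rfl
  | cons h q ih =>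
    rw [SimpleGraph.Walk.reverse_cons, wW_append', ih]
    simp [wW, SimpleGraph.Walk.darts_cons, wt_symm', add_comm]

lemma gdist_comm' (a b : GadgetVert G x) : gdist G x a b = gdist G x b a := by
  have key : ∀ (c d : GadgetVert G x), gdist G x c d ≤ gdist G x d c := by
    intro c d
    show gdist G x c d ≤ ⨅ p : (gadgetGraph G x).Walk d c, wW G x p
    refine le_iInf fun p => ?_
    exact (gdist_le' p.reverse).trans_eq (wW_reverse' p)
  exact le_antisymm (key a b) (key b a)

lemma gdist_triangle (a b c : GadgetVert G x) :
    gdist G x a c ≤ gdist G x a b + gdist G x b c := by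
  show gdist G x a c ≤ (⨅ p : (gadgetGraph G x).Walk a b, wW G x p) + _
  rw [ENNReal.iInf_add]
  refine le_iInf fun p => ?_
  show gdist G x a c ≤ _ + (⨅ q : (gadgetGraph G x).Walk b c, wW G x q)
  rw [ENNReal.add_iInf]
  refine le_iInf fun q => ?_
  exact (gdist_le' (p.append q)).trans_eq (wW_append' p q)

lemma gdist_self (a : GadgetVert G x) : gdist G x a a ≤ 0 :=
  (gdist_le' SimpleGraph.Walk.nil).trans_eq rfl

lemma gdist_le_wt {a b : GadgetVert G x}
    (h : (gadgetGraph G x).Adj a b) : gdist G x a b ≤ wt G x a b := by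
  refine (gdist_le' (SimpleGraph.Walk.cons h SimpleGraph.Walk.nil)).trans_eq ?_
  simp [wW]

lemma AAdj_ne' : ∀ j j' : Fin 6, AAdj j j' → j ≠ j' := by unfold AAdj; decide

lemma AAdj_ne {j j' : Fin 6} (h : AAdj j j') : j ≠ j' := AAdj_ne' j j' h

lemma adj_inl_inr {s : V} {a b : V} {i : ℕ} {j : Fin 6} {h} :
    (gadgetGraph G x).Adj (Sum.inl s) (Sum.inr ⟨(a, b, i, j), h⟩) ↔
      ((s = a ∧ i = 0 ∧ j = 0) ∨ (s = b ∧ i = x s(a, b) - 1 ∧ j = 5)) := by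
  rw [gadgetGraph, SimpleGraph.fromRel_adj]
  constructor
  · rintro ⟨-, h1 | h1⟩
    · exact h1
    · exact absurd h1 (by simp [gadgetRel])
  · intro h1
    exact ⟨by simp, Or.inl h1⟩

lemma adj_inr_inl {s : V} {a b : V} {i : ℕ} {j : Fin 6} {h} :
    (gadgetGraph G x).Adj (Sum.inr ⟨(a, b, i, j), h⟩) (Sum.inl s) ↔
      ((s = a ∧ i = 0 ∧ j = 0) ∨ (s = b ∧ i = x s(a, b) - 1 ∧ j = 5)) := by
  rw [(gadgetGraph G x).adj_comm, adj_inl_inr]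

lemma adj_inr_inr {a b a' b' : V} {i i' : ℕ} {j j' : Fin 6} {h h'} :
    (gadgetGraph G x).Adj (Sum.inr ⟨(a, b, i, j), h⟩) (Sum.inr ⟨(a', b', i', j'), h'⟩) ↔
      (a = a' ∧ b = b' ∧ ((i = i' ∧ (AAdj j j' ∨ AAdj j' j)) ∨
        (i' = i + 1 ∧ j = 5 ∧ j' = 0) ∨ (i = i' + 1 ∧ j' = 5 ∧ j = 0))) := by
  rw [gadgetGraph, SimpleGraph.fromRel_adj]
  constructor
  · rintro ⟨-, h1 | h1⟩
    · simp only [gadgetRel] at h1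
      obtain ⟨rfl, rfl, h2 | h2⟩ := h1
      · exact ⟨rfl, rfl, Or.inl ⟨h2.1, Or.inl h2.2⟩⟩
      · exact ⟨rfl, rfl, Or.inr (Or.inl h2)⟩
    · simp only [gadgetRel] at h1
      obtain ⟨h3, h4, h2 | h2⟩ := h1
      · exact ⟨h3.symm, h4.symm, Or.inl ⟨h2.1.symm, Or.inr h2.2⟩⟩
      · exact ⟨h3.symm, h4.symm, Or.inr (Or.inr h2)⟩
  · rintro ⟨rfl, rfl, hc⟩
    have hne : (⟨(a, b, i, j), h⟩ : GadgetAux G x) ≠ ⟨(a, b, i', j'), h'⟩ → 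
        (Sum.inr ⟨(a, b, i, j), h⟩ : GadgetVert G x) ≠ Sum.inr ⟨(a, b, i', j'), h'⟩ := by
      intro hh hc2; exact hh (by injection hc2)
    rcases hc with ⟨rfl, hA | hA⟩ | ⟨hi, rfl, rfl⟩ | ⟨hi, rfl, rfl⟩
    · refine ⟨hne fun hc2 => (AAdj_ne hA) ?_, Or.inl ?_⟩
      · injection hc2 with hc3; injection hc3 with _ hc4
        simpa using hc4
      · simp [gadgetRel, hA]
    · refine ⟨hne fun hc2 => (AAdj_ne hA) ?_, Or.inr ?_⟩
      · injection hc2 with hc3; injection hc3 with _ hc4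
        simp at hc4; simp [hc4]
      · simp [gadgetRel, hA]
    · refine ⟨hne fun hc2 => ?_, Or.inl ?_⟩
      · injection hc2 with hc3; injection hc3 with _ hc4
        simp at hc4
      · simp [gadgetRel, hi]
    · refine ⟨hne fun hc2 => ?_, Or.inr ?_⟩
      · injection hc2 with hc3; injection hc3 with _ hc4
        simp at hc4
      · simp [gadgetRel, hi]


section nbhd
variable {a b : V} {i : ℕ} (h : a < b ∧ G.Adj a b ∧ i < x s(a, b))

lemma aux1 : ∀ j' : Fin 6, AAdj 1 j' ∨ AAdj j' 1 → j' = 0 ∨ j' = 2 ∨ j' = 3 := by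
  unfold AAdj; decide
lemma aux2 : ∀ j' : Fin 6, AAdj 2 j' ∨ AAdj j' 2 → j' = 0 ∨ j' = 1 ∨ j' = 4 := by
  unfold AAdj; decide
lemma aux3 : ∀ j' : Fin 6, AAdj 3 j' ∨ AAdj j' 3 → j' = 1 ∨ j' = 4 ∨ j' = 5 := by
  unfold AAdj; decide
lemma aux4 : ∀ j' : Fin 6, AAdj 4 j' ∨ AAdj j' 4 → j' = 2 ∨ j' = 3 ∨ j' = 5 := by
  unfold AAdj; decide
lemma aux0 : ∀ j' : Fin 6, AAdj 0 j' ∨ AAdj j' 0 → j' = 1 ∨ j' = 2 := by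
  unfold AAdj; decide
lemma aux5 : ∀ j' : Fin 6, AAdj 5 j' ∨ AAdj j' 5 → j' = 3 ∨ j' = 4 := by
  unfold AAdj; decide

lemma nbhd1 (y : GadgetVert G x) :
    (gadgetGraph G x).Adj (Sum.inr ⟨(a, b, i, 1), h⟩) y ↔
      y = Sum.inr ⟨(a, b, i, 0), h⟩ ∨ y = Sum.inr ⟨(a, b, i, 2), h⟩ ∨
        y = Sum.inr ⟨(a, b, i, 3), h⟩ := by
  constructor
  · intro hadj
    rcases y with s | ⟨⟨a', b', i', j'⟩, h'⟩
    · rw [adj_inr_inl] at hadj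
      rcases hadj with ⟨-, -, hj⟩ | ⟨-, -, hj⟩ <;> exact absurd hj (by decide)
    · rw [adj_inr_inr] at hadj
      obtain ⟨rfl, rfl, hc⟩ := hadj
      rcases hc with ⟨rfl, hA⟩ | ⟨-, hj, -⟩ | ⟨-, -, hj⟩
      · rcases aux1 j' hA with rfl | rfl | rfl
        · exact Or.inl rfl
        · exact Or.inr (Or.inl rfl)
        · exact Or.inr (Or.inr rfl)
      · exact absurd hj (by decide)
      · exact absurd hj (by decide)
  · rintro (rfl | rfl | rfl) <;>
      exact adj_inr_inr.mpr ⟨rfl, rfl, Or.inl ⟨rfl, by unfold AAdj; decide⟩⟩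


lemma nbhd2 (y : GadgetVert G x) :
    (gadgetGraph G x).Adj (Sum.inr ⟨(a, b, i, 2), h⟩) y ↔
      y = Sum.inr ⟨(a, b, i, 0), h⟩ ∨ y = Sum.inr ⟨(a, b, i, 1), h⟩ ∨
        y = Sum.inr ⟨(a, b, i, 4), h⟩ := by
  constructor
  · intro hadj
    rcases y with s | ⟨⟨a', b', i', j'⟩, h'⟩
    · rw [adj_inr_inl] at hadj
      rcases hadj with ⟨-, -, hj⟩ | ⟨-, -, hj⟩ <;> exact absurd hj (by decide)
    · rw [adj_inr_inr] at hadj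
      obtain ⟨rfl, rfl, hc⟩ := hadj
      rcases hc with ⟨rfl, hA⟩ | ⟨-, hj, -⟩ | ⟨-, -, hj⟩
      · rcases aux2 j' hA with rfl | rfl | rfl
        · exact Or.inl rfl
        · exact Or.inr (Or.inl rfl)
        · exact Or.inr (Or.inr rfl)
      · exact absurd hj (by decide)
      · exact absurd hj (by decide)
  · rintro (rfl | rfl | rfl) <;>
      exact adj_inr_inr.mpr ⟨rfl, rfl, Or.inl ⟨rfl, by unfold AAdj; decide⟩⟩

lemma nbhd3 (y : GadgetVert G x) :
    (gadgetGraph G x).Adj (Sum.inr ⟨(a, b, i, 3), h⟩) y ↔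
      y = Sum.inr ⟨(a, b, i, 1), h⟩ ∨ y = Sum.inr ⟨(a, b, i, 4), h⟩ ∨
        y = Sum.inr ⟨(a, b, i, 5), h⟩ := by
  constructor
  · intro hadj
    rcases y with s | ⟨⟨a', b', i', j'⟩, h'⟩
    · rw [adj_inr_inl] at hadj
      rcases hadj with ⟨-, -, hj⟩ | ⟨-, -, hj⟩ <;> exact absurd hj (by decide)
    · rw [adj_inr_inr] at hadj
      obtain ⟨rfl, rfl, hc⟩ := hadj
      rcases hc with ⟨rfl, hA⟩ | ⟨-, hj, -⟩ | ⟨-, -, hj⟩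
      · rcases aux3 j' hA with rfl | rfl | rfl
        · exact Or.inl rfl
        · exact Or.inr (Or.inl rfl)
        · exact Or.inr (Or.inr rfl)
      · exact absurd hj (by decide)
      · exact absurd hj (by decide)
  · rintro (rfl | rfl | rfl) <;>
      exact adj_inr_inr.mpr ⟨rfl, rfl, Or.inl ⟨rfl, by unfold AAdj; decide⟩⟩

lemma nbhd4 (y : GadgetVert G x) :
    (gadgetGraph G x).Adj (Sum.inr ⟨(a, b, i, 4), h⟩) y ↔
      y = Sum.inr ⟨(a, b, i, 2), h⟩ ∨ y = Sum.inr ⟨(a, b, i, 3), h⟩ ∨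
        y = Sum.inr ⟨(a, b, i, 5), h⟩ := by
  constructor
  · intro hadj
    rcases y with s | ⟨⟨a', b', i', j'⟩, h'⟩
    · rw [adj_inr_inl] at hadj
      rcases hadj with ⟨-, -, hj⟩ | ⟨-, -, hj⟩ <;> exact absurd hj (by decide)
    · rw [adj_inr_inr] at hadj
      obtain ⟨rfl, rfl, hc⟩ := hadj
      rcases hc with ⟨rfl, hA⟩ | ⟨-, hj, -⟩ | ⟨-, -, hj⟩
      · rcases aux4 j' hA with rfl | rfl | rfl
        · exact Or.inl rfl
        · exact Or.inr (Or.inl rfl)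
        · exact Or.inr (Or.inr rfl)
      · exact absurd hj (by decide)
      · exact absurd hj (by decide)
  · rintro (rfl | rfl | rfl) <;>
      exact adj_inr_inr.mpr ⟨rfl, rfl, Or.inl ⟨rfl, by unfold AAdj; decide⟩⟩

end nbhd

section nbhd05
variable {a b : V}

lemma nbhd0_first (h : a < b ∧ G.Adj a b ∧ 0 < x s(a, b)) (y : GadgetVert G x) :
    (gadgetGraph G x).Adj (Sum.inr ⟨(a, b, 0, 0), h⟩) y ↔
      y = Sum.inl a ∨ y = Sum.inr ⟨(a, b, 0, 1), h⟩ ∨ y = Sum.inr ⟨(a, b, 0, 2), h⟩ := by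
  constructor
  · intro hadj
    rcases y with s | ⟨⟨a', b', i', j'⟩, h'⟩
    · rw [adj_inr_inl] at hadj
      rcases hadj with ⟨rfl, -, -⟩ | ⟨-, -, hj⟩
      · exact Or.inl rfl
      · exact absurd hj (by decide)
    · rw [adj_inr_inr] at hadj
      obtain ⟨rfl, rfl, hc⟩ := hadj
      rcases hc with ⟨rfl, hA⟩ | ⟨-, hj, -⟩ | ⟨hj, -, -⟩
      · rcases aux0 j' hA with rfl | rfl
        · exact Or.inr (Or.inl rfl)
        · exact Or.inr (Or.inr rfl)
      · exact absurd hj (by decide)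
      · exact absurd hj (by omega)
  · rintro (rfl | rfl | rfl)
    · exact adj_inl_inr.mpr (Or.inl ⟨rfl, rfl, rfl⟩) |>.symm
    · exact adj_inr_inr.mpr ⟨rfl, rfl, Or.inl ⟨rfl, by unfold AAdj; decide⟩⟩
    · exact adj_inr_inr.mpr ⟨rfl, rfl, Or.inl ⟨rfl, by unfold AAdj; decide⟩⟩

lemma nbhd0_mid {i : ℕ} (h : a < b ∧ G.Adj a b ∧ i + 1 < x s(a, b)) (y : GadgetVert G x) :
    (gadgetGraph G x).Adj (Sum.inr ⟨(a, b, i + 1, 0), h⟩) y ↔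
      y = Sum.inr ⟨(a, b, i, 5), ⟨h.1, h.2.1, Nat.lt_of_succ_lt h.2.2⟩⟩ ∨
        y = Sum.inr ⟨(a, b, i + 1, 1), h⟩ ∨ y = Sum.inr ⟨(a, b, i + 1, 2), h⟩ := by
  constructor
  · intro hadj
    rcases y with s | ⟨⟨a', b', i', j'⟩, h'⟩
    · rw [adj_inr_inl] at hadj
      rcases hadj with ⟨-, hi, -⟩ | ⟨-, -, hj⟩
      · exact absurd hi (by omega)
      · exact absurd hj (by decide)
    · rw [adj_inr_inr] at hadj
      obtain ⟨rfl, rfl, hc⟩ := hadj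
      rcases hc with ⟨rfl, hA⟩ | ⟨-, hj, -⟩ | ⟨hj, rfl, -⟩
      · rcases aux0 j' hA with rfl | rfl
        · exact Or.inr (Or.inl rfl)
        · exact Or.inr (Or.inr rfl)
      · exact absurd hj (by decide)
      · have hi : i' = i := by omega
        subst hi
        exact Or.inl rfl
  · rintro (rfl | rfl | rfl)
    · exact adj_inr_inr.mpr ⟨rfl, rfl, Or.inr (Or.inr ⟨rfl, rfl, rfl⟩)⟩
    · exact adj_inr_inr.mpr ⟨rfl, rfl, Or.inl ⟨rfl, by unfold AAdj; decide⟩⟩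
    · exact adj_inr_inr.mpr ⟨rfl, rfl, Or.inl ⟨rfl, by unfold AAdj; decide⟩⟩

lemma nbhd5_last {i : ℕ} (h : a < b ∧ G.Adj a b ∧ i < x s(a, b))
    (hlast : i + 1 = x s(a, b)) (y : GadgetVert G x) :
    (gadgetGraph G x).Adj (Sum.inr ⟨(a, b, i, 5), h⟩) y ↔
      y = Sum.inl b ∨ y = Sum.inr ⟨(a, b, i, 3), h⟩ ∨ y = Sum.inr ⟨(a, b, i, 4), h⟩ := by
  constructor
  · intro hadj
    rcases y with s | ⟨⟨a', b', i', j'⟩, h'⟩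
    · rw [adj_inr_inl] at hadj
      rcases hadj with ⟨-, -, hj⟩ | ⟨rfl, -, -⟩
      · exact absurd hj (by decide)
      · exact Or.inl rfl
    · rw [adj_inr_inr] at hadj
      obtain ⟨rfl, rfl, hc⟩ := hadj
      rcases hc with ⟨rfl, hA⟩ | ⟨hj, -, -⟩ | ⟨-, -, hj⟩
      · rcases aux5 j' hA with rfl | rfl
        · exact Or.inr (Or.inl rfl)
        · exact Or.inr (Or.inr rfl)
      · have hx : i' < x s(a, b) := h'.2.2
        omega
      · exact absurd hj (by decide)
  · rintro (rfl | rfl | rfl)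
    · exact (adj_inl_inr.mpr (Or.inr ⟨rfl, by omega, rfl⟩)).symm
    · exact adj_inr_inr.mpr ⟨rfl, rfl, Or.inl ⟨rfl, by unfold AAdj; decide⟩⟩
    · exact adj_inr_inr.mpr ⟨rfl, rfl, Or.inl ⟨rfl, by unfold AAdj; decide⟩⟩

lemma nbhd5_mid {i : ℕ} (h : a < b ∧ G.Adj a b ∧ i < x s(a, b))
    (hmid : i + 1 < x s(a, b)) (y : GadgetVert G x) :
    (gadgetGraph G x).Adj (Sum.inr ⟨(a, b, i, 5), h⟩) y ↔
      y = Sum.inr ⟨(a, b, i + 1, 0), ⟨h.1, h.2.1, hmid⟩⟩ ∨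
        y = Sum.inr ⟨(a, b, i, 3), h⟩ ∨ y = Sum.inr ⟨(a, b, i, 4), h⟩ := by
  constructor
  · intro hadj
    rcases y with s | ⟨⟨a', b', i', j'⟩, h'⟩
    · rw [adj_inr_inl] at hadj
      rcases hadj with ⟨-, -, hj⟩ | ⟨-, hi, -⟩
      · exact absurd hj (by decide)
      · exact absurd hi (by omega)
    · rw [adj_inr_inr] at hadj
      obtain ⟨rfl, rfl, hc⟩ := hadj
      rcases hc with ⟨rfl, hA⟩ | ⟨hj, -, rfl⟩ | ⟨-, -, hj⟩
      · rcases aux5 j' hA with rfl | rfl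
        · exact Or.inr (Or.inl rfl)
        · exact Or.inr (Or.inr rfl)
      · have hi : i' = i + 1 := hj
        subst hi
        exact Or.inl rfl
      · exact absurd hj (by decide)
  · rintro (rfl | rfl | rfl)
    · exact adj_inr_inr.mpr ⟨rfl, rfl, Or.inr (Or.inl ⟨rfl, rfl, rfl⟩)⟩
    · exact adj_inr_inr.mpr ⟨rfl, rfl, Or.inl ⟨rfl, by unfold AAdj; decide⟩⟩
    · exact adj_inr_inr.mpr ⟨rfl, rfl, Or.inl ⟨rfl, by unfold AAdj; decide⟩⟩

end nbhd05

section march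
variable {G : SimpleGraph V} {x : Sym2 V → ℕ} {r : ℕ} {χ : GadgetVert G x → ℕ}

lemma inj_nb (hχ2 : Dist2Coloring G x χ) {z a b : GadgetVert G x}
    (ha : (gadgetGraph G x).Adj z a) (hb : (gadgetGraph G x).Adj z b)
    (hc : χ a = χ b) : a = b :=
  hχ2 z (Set.mem_insert_iff.mpr (Or.inr ha)) (Set.mem_insert_iff.mpr (Or.inr hb)) hc

lemma adj_ne_color (hχ2 : Dist2Coloring G x χ) {a b : GadgetVert G x}
    (h : (gadgetGraph G x).Adj a b) : χ a ≠ χ b := by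
  intro hc
  have := hχ2 a (Set.mem_insert_iff.mpr (Or.inr h)) (Set.mem_insert _ _) hc.symm
  exact (gadgetGraph G x).ne_of_adj h this.symm

lemma march1 (hχ2 : Dist2Coloring G x χ) (hχc : EdgeConsistent G x r χ)
    (u T1 T2 Q2 Q3 v' a0 a1 a2 a3 a4 a5 Z : GadgetVert G x)
    (huT1 : (gadgetGraph G x).Adj u T1) (hT1T2 : (gadgetGraph G x).Adj T1 T2)
    (hT2u : (gadgetGraph G x).Adj T2 u) (hT1Q2 : (gadgetGraph G x).Adj T1 Q2)
    (hQ2Q3 : (gadgetGraph G x).Adj Q2 Q3)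
    (hball : ∀ Y : GadgetVert G x,
      (Y = a0 ∨ Y = a1 ∨ Y = a2 ∨ Y = a3 ∨ Y = a4 ∨ Y = a5) →
      inGball G x r T1 Y ∧ inGball G x r T2 Y ∧ inGball G x r u Y ∧ inGball G x r Q2 Y)
    (hn0 : ∀ y, (gadgetGraph G x).Adj a0 y ↔ y = v' ∨ y = a1 ∨ y = a2)
    (hn1 : ∀ y, (gadgetGraph G x).Adj a1 y ↔ y = a0 ∨ y = a2 ∨ y = a3)
    (hn2 : ∀ y, (gadgetGraph G x).Adj a2 y ↔ y = a0 ∨ y = a1 ∨ y = a4)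
    (hn3 : ∀ y, (gadgetGraph G x).Adj a3 y ↔ y = a1 ∨ y = a4 ∨ y = a5)
    (hn4 : ∀ y, (gadgetGraph G x).Adj a4 y ↔ y = a2 ∨ y = a3 ∨ y = a5)
    (hn5 : ∀ y, (gadgetGraph G x).Adj a5 y ↔ y = a3 ∨ y = a4 ∨ y = Z)
    (nd1 : v' ≠ a2) (nd2 : a1 ≠ a2) (nd3 : a1 ≠ a4) (nd4 : a1 ≠ a5)
    (cuT1 : χ u ≠ χ T1) (cuT2 : χ u ≠ χ T2) (cT1T2 : χ T1 ≠ χ T2)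
    (cQ2u : χ Q2 ≠ χ u) (cQ2T2 : χ Q2 ≠ χ T2)
    (cQ3T1 : χ Q3 ≠ χ T1) (cQ3T2 : χ Q3 ≠ χ T2) (cQ2Q3 : χ Q2 ≠ χ Q3)
    (hχv' : χ v' = χ u) (hχa0 : χ a0 = χ T1) (hχa1 : χ a1 = χ T2) : False := by
  have adj0v : (gadgetGraph G x).Adj a0 v' := (hn0 v').mpr (Or.inl rfl)
  have adj01 : (gadgetGraph G x).Adj a0 a1 := (hn0 a1).mpr (Or.inr (Or.inl rfl))
  have adj02 : (gadgetGraph G x).Adj a0 a2 := (hn0 a2).mpr (Or.inr (Or.inr rfl))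
  have adj31 : (gadgetGraph G x).Adj a3 a1 := (hn3 a1).mpr (Or.inl rfl)
  have adj34 : (gadgetGraph G x).Adj a3 a4 := (hn3 a4).mpr (Or.inr (Or.inl rfl))
  have adj35 : (gadgetGraph G x).Adj a3 a5 := (hn3 a5).mpr (Or.inr (Or.inr rfl))
  -- step S2 : the `χ u`-coloured neighbour of `a1`
  obtain ⟨y, hy, hyc⟩ := hχc T2 u hT2u a1 (hball a1 (by tauto)).2.1 hχa1
  rcases (hn1 y).mp hy with h' | h' | h' <;> rw [h'] at hyc
  · exact cuT1 (hyc.symm.trans hχa0)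
  · exact nd1 (inj_nb hχ2 adj02 adj0v (hyc.trans hχv'.symm)).symm
  · -- χ a3 = χ u
    have hχa3 : χ a3 = χ u := hyc
    -- step S3 : the `χ T1`-coloured neighbour of `a3`
    obtain ⟨y2, hy2, hy2c⟩ := hχc u T1 huT1 a3 (hball a3 (by tauto)).2.2.1 hχa3
    rcases (hn3 y2).mp hy2 with h2 | h2 | h2 <;> rw [h2] at hy2c
    · exact cT1T2 (hy2c.symm.trans hχa1).symm.symm
    · -- dead branch : χ a4 = χ T1
      have hχa4 : χ a4 = χ T1 := hy2c
      obtain ⟨z, hz, hzc⟩ := hχc T1 T2 hT1T2 a4 (hball a4 (by tauto)).1 hχa4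
      rcases (hn4 z).mp hz with h3 | h3 | h3 <;> rw [h3] at hzc
      · exact nd2 (inj_nb hχ2 adj01 adj02 (hχa1.trans hzc.symm))
      · exact cuT2 (hχa3.symm.trans hzc)
      · exact nd4 (inj_nb hχ2 adj31 adj35 (hχa1.trans hzc.symm))
    · -- surviving branch : χ a5 = χ T1
      have hχa5 : χ a5 = χ T1 := hy2c
      -- step S4 : the `χ T2`-coloured neighbour of `a5` is `Z`
      obtain ⟨z, hz, hzc⟩ := hχc T1 T2 hT1T2 a5 (hball a5 (by tauto)).1 hχa5
      rcases (hn5 z).mp hz with h3 | h3 | h3 <;> rw [h3] at hzc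
      · exact cuT2 (hχa3.symm.trans hzc)
      · exact nd3 (inj_nb hχ2 adj31 adj34 (hχa1.trans hzc.symm))
      · have hχZ : χ Z = χ T2 := hzc
        -- step S5 : the `χ Q2`-coloured neighbour of `a0` is `a2`
        obtain ⟨w, hw, hwc⟩ := hχc T1 Q2 hT1Q2 a0 (hball a0 (by tauto)).1 hχa0
        rcases (hn0 w).mp hw with h4 | h4 | h4 <;> rw [h4] at hwc
        · exact cQ2u (hwc.symm.trans hχv')
        · exact cQ2T2 (hwc.symm.trans hχa1)
        · have hχa2 : χ a2 = χ Q2 := hwc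
          -- step S6 : the `χ Q3`-coloured neighbour of `a2` is `a4`
          obtain ⟨w2, hw2, hw2c⟩ := hχc Q2 Q3 hQ2Q3 a2 (hball a2 (by tauto)).2.2.2 hχa2
          rcases (hn2 w2).mp hw2 with h5 | h5 | h5 <;> rw [h5] at hw2c
          · exact cQ3T1 (hw2c.symm.trans hχa0)
          · exact cQ3T2 (hw2c.symm.trans hχa1)
          · have hχa4 : χ a4 = χ Q3 := hw2c
            -- step S9 : the `χ Q2`-coloured neighbour of `a5` cannot exist
            obtain ⟨w3, hw3, hw3c⟩ := hχc T1 Q2 hT1Q2 a5 (hball a5 (by tauto)).1 hχa5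
            rcases (hn5 w3).mp hw3 with h6 | h6 | h6 <;> rw [h6] at hw3c
            · exact cQ2u (hw3c.symm.trans hχa3)
            · exact cQ2Q3 (hw3c.symm.trans hχa4)
            · exact cQ2T2 (hw3c.symm.trans hχZ)


lemma march (hχ2 : Dist2Coloring G x χ) (hχc : EdgeConsistent G x r χ)
    (u T1 T2 Q2 Q3 v' a0 a1 a2 a3 a4 a5 Z : GadgetVert G x)
    (huT1 : (gadgetGraph G x).Adj u T1) (hT1T2 : (gadgetGraph G x).Adj T1 T2)
    (hT2u : (gadgetGraph G x).Adj T2 u) (hT1Q2 : (gadgetGraph G x).Adj T1 Q2)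
    (hQ2Q3 : (gadgetGraph G x).Adj Q2 Q3)
    (hball : ∀ Y : GadgetVert G x,
      (Y = a0 ∨ Y = a1 ∨ Y = a2 ∨ Y = a3 ∨ Y = a4 ∨ Y = a5) →
      inGball G x r T1 Y ∧ inGball G x r T2 Y ∧ inGball G x r u Y ∧ inGball G x r Q2 Y)
    (hn0 : ∀ y, (gadgetGraph G x).Adj a0 y ↔ y = v' ∨ y = a1 ∨ y = a2)
    (hn1 : ∀ y, (gadgetGraph G x).Adj a1 y ↔ y = a0 ∨ y = a2 ∨ y = a3)
    (hn2 : ∀ y, (gadgetGraph G x).Adj a2 y ↔ y = a0 ∨ y = a1 ∨ y = a4)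
    (hn3 : ∀ y, (gadgetGraph G x).Adj a3 y ↔ y = a1 ∨ y = a4 ∨ y = a5)
    (hn4 : ∀ y, (gadgetGraph G x).Adj a4 y ↔ y = a2 ∨ y = a3 ∨ y = a5)
    (hn5 : ∀ y, (gadgetGraph G x).Adj a5 y ↔ y = a3 ∨ y = a4 ∨ y = Z)
    (nd0 : v' ≠ a1) (nd1 : v' ≠ a2) (nd2 : a1 ≠ a2) (nd3 : a1 ≠ a4) (nd4 : a1 ≠ a5)
    (nd5 : a2 ≠ a3) (nd6 : a2 ≠ a5)
    (cuT1 : χ u ≠ χ T1) (cuT2 : χ u ≠ χ T2) (cT1T2 : χ T1 ≠ χ T2)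
    (cQ2u : χ Q2 ≠ χ u) (cQ2T2 : χ Q2 ≠ χ T2)
    (cQ3T1 : χ Q3 ≠ χ T1) (cQ3T2 : χ Q3 ≠ χ T2) (cQ2Q3 : χ Q2 ≠ χ Q3)
    (hχv' : χ v' = χ u) (hχa0 : χ a0 = χ T1) : False := by
  -- step S1 : the `χ T2`-coloured neighbour of `a0`
  obtain ⟨s, hs, hsc⟩ := hχc T1 T2 hT1T2 a0 (hball a0 (by tauto)).1 hχa0
  rcases (hn0 s).mp hs with h' | h' | h' <;> rw [h'] at hsc
  · exact cuT2 (hχv'.symm.trans hsc)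
  · exact march1 hχ2 hχc u T1 T2 Q2 Q3 v' a0 a1 a2 a3 a4 a5 Z huT1 hT1T2 hT2u hT1Q2
      hQ2Q3 hball hn0 hn1 hn2 hn3 hn4 hn5 nd1 nd2 nd3 nd4 cuT1 cuT2 cT1T2 cQ2u cQ2T2
      cQ3T1 cQ3T2 cQ2Q3 hχv' hχa0 hsc
  · refine march1 hχ2 hχc u T1 T2 Q2 Q3 v' a0 a2 a1 a4 a3 a5 Z huT1 hT1T2 hT2u hT1Q2
      hQ2Q3 (fun Y hY => hball Y (by tauto)) (fun y => ?_) hn2 hn1 hn4 hn3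
      (fun y => ?_) nd0 nd2.symm nd5 nd6 cuT1 cuT2 cT1T2 cQ2u cQ2T2
      cQ3T1 cQ3T2 cQ2Q3 hχv' hχa0 hsc
    · rw [hn0 y]; tauto
    · rw [hn5 y]; tauto


lemma ballpack {u' X Y : GadgetVert G x} {v : V}
    (hXu : gdist G x X u' ≤ 0) (hY : gdist G x (Sum.inl v) Y ≤ half)
    (hvu : gdist G x (Sum.inl v) u' + half ≤ r) : inGball G x r X Y := by
  show gdist G x X Y ≤ r
  calc gdist G x X Y ≤ gdist G x X (Sum.inl v) + gdist G x (Sum.inl v) Y :=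
        gdist_triangle _ _ _
    _ ≤ (gdist G x X u' + gdist G x u' (Sum.inl v)) + half :=
        add_le_add (gdist_triangle _ _ _) hY
    _ ≤ (0 + gdist G x u' (Sum.inl v)) + half :=
        add_le_add (add_le_add_left hXu _) le_rfl
    _ = gdist G x (Sum.inl v) u' + half := by rw [zero_add, gdist_comm' u' (Sum.inl v)]
    _ ≤ r := hvu

lemma half_extend {v : V} {P P' : GadgetAux G x}
    (hY : gdist G x (Sum.inl v) (Sum.inr P) ≤ half)
    (h : (gadgetGraph G x).Adj (Sum.inr P) (Sum.inr P')) :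
    gdist G x (Sum.inl v) (Sum.inr P') ≤ half := by
  calc gdist G x (Sum.inl v) (Sum.inr P')
      ≤ gdist G x (Sum.inl v) (Sum.inr P) + gdist G x (Sum.inr P) (Sum.inr P') :=
        gdist_triangle _ _ _
    _ ≤ half + wt G x (Sum.inr P) (Sum.inr P') := add_le_add hY (gdist_le_wt h)
    _ = half := by rw [wt_inr_inr, add_zero]

lemma colors_setup (hχ2 : Dist2Coloring G x χ) {u T1 T2 Q2 Q3 : GadgetVert G x}
    (h1 : (gadgetGraph G x).Adj u T1) (h2 : (gadgetGraph G x).Adj T1 T2)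
    (h3 : (gadgetGraph G x).Adj T2 u) (h4 : (gadgetGraph G x).Adj T1 Q2)
    (h5 : (gadgetGraph G x).Adj Q2 Q3)
    (h6 : (gadgetGraph G x).Adj T2 Q3 ∨ ((gadgetGraph G x).Adj u Q3 ∧ T2 ≠ Q3))
    (nd1 : u ≠ Q2) (nd2 : T2 ≠ Q2) (nd3 : T1 ≠ Q3) :
    χ u ≠ χ T1 ∧ χ u ≠ χ T2 ∧ χ T1 ≠ χ T2 ∧ χ Q2 ≠ χ u ∧ χ Q2 ≠ χ T2 ∧
      χ Q3 ≠ χ T1 ∧ χ Q3 ≠ χ T2 ∧ χ Q2 ≠ χ Q3 := by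
  refine ⟨adj_ne_color hχ2 h1, (adj_ne_color hχ2 h3).symm, adj_ne_color hχ2 h2,
    fun hc => nd1 (inj_nb hχ2 h4 h1.symm hc).symm,
    fun hc => nd2 (inj_nb hχ2 h4 h2 hc).symm,
    fun hc => nd3 (inj_nb hχ2 h5 h4.symm hc).symm, ?_, adj_ne_color hχ2 h5⟩
  rcases h6 with h6 | ⟨h6, hne⟩
  · exact (adj_ne_color hχ2 h6).symm
  · exact fun hc => hne (inj_nb hχ2 h6 h3.symm hc).symm


set_option maxHeartbeats 2000000 in
lemma key (hχ2 : Dist2Coloring G x χ) (hχc : EdgeConsistent G x r χ)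
    {v : V} {u T1 T2 Q2 Q3 : GadgetVert G x}
    (huT1 : (gadgetGraph G x).Adj u T1) (hT1T2 : (gadgetGraph G x).Adj T1 T2)
    (hT2u : (gadgetGraph G x).Adj T2 u) (hT1Q2 : (gadgetGraph G x).Adj T1 Q2)
    (hQ2Q3 : (gadgetGraph G x).Adj Q2 Q3)
    (hdT1 : gdist G x T1 u ≤ 0) (hdT2 : gdist G x T2 u ≤ 0)
    (hdQ2 : gdist G x Q2 u ≤ 0)
    (cuT1 : χ u ≠ χ T1) (cuT2 : χ u ≠ χ T2) (cT1T2 : χ T1 ≠ χ T2)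
    (cQ2u : χ Q2 ≠ χ u) (cQ2T2 : χ Q2 ≠ χ T2)
    (cQ3T1 : χ Q3 ≠ χ T1) (cQ3T2 : χ Q3 ≠ χ T2) (cQ2Q3 : χ Q2 ≠ χ Q3)
    (hvu : gdist G x (Sum.inl v) u + half ≤ r)
    (hcol : χ u = χ (Sum.inl v)) : False := by
  have hub : inGball G x r u (Sum.inl v) := by
    show gdist G x u (Sum.inl v) ≤ r
    rw [gdist_comm']
    exact le_trans le_self_add hvu
  obtain ⟨a0, hva0, ha0c⟩ := hχc u T1 huT1 (Sum.inl v) hub hcol.symm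
  rcases a0 with s | ⟨⟨p, q, i, j0⟩, h0⟩
  · exact not_adj_inl_inl v s hva0
  have hchar := adj_inl_inr.mp hva0
  rcases hchar with ⟨rfl, rfl, rfl⟩ | ⟨rfl, hi, rfl⟩
  · -- Case A : entry at vertex 0 of the first gadget of the chain (v, q)
    have h0' : v < q ∧ G.Adj v q ∧ 0 < x s(v, q) := h0
    have hva0' : (gadgetGraph G x).Adj (Sum.inl v) (Sum.inr ⟨(v, q, 0, 0), h0'⟩) := hva0
    have ha0c' : χ (Sum.inr ⟨(v, q, 0, 0), h0'⟩) = χ T1 := ha0c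
    clear hva0 ha0c
    set a0 : GadgetVert G x := Sum.inr ⟨(v, q, 0, 0), h0'⟩ with ha0def
    set a1 : GadgetVert G x := Sum.inr ⟨(v, q, 0, 1), h0'⟩ with ha1def
    set a2 : GadgetVert G x := Sum.inr ⟨(v, q, 0, 2), h0'⟩ with ha2def
    set a3 : GadgetVert G x := Sum.inr ⟨(v, q, 0, 3), h0'⟩ with ha3def
    set a4 : GadgetVert G x := Sum.inr ⟨(v, q, 0, 4), h0'⟩ with ha4def
    set a5 : GadgetVert G x := Sum.inr ⟨(v, q, 0, 5), h0'⟩ with ha5def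
    have h0h : gdist G x (Sum.inl v) a0 ≤ half :=
      (gdist_le_wt hva0').trans_eq (wt_inl_left v a0)
    have h1h : gdist G x (Sum.inl v) a1 ≤ half :=
      half_extend h0h ((nbhd1 h0' a0).mpr (Or.inl rfl)).symm
    have h2h : gdist G x (Sum.inl v) a2 ≤ half :=
      half_extend h0h ((nbhd2 h0' a0).mpr (Or.inl rfl)).symm
    have h3h : gdist G x (Sum.inl v) a3 ≤ half :=
      half_extend h1h ((nbhd1 h0' a3).mpr (Or.inr (Or.inr rfl)))
    have h4h : gdist G x (Sum.inl v) a4 ≤ half :=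
      half_extend h2h ((nbhd2 h0' a4).mpr (Or.inr (Or.inr rfl)))
    have h5h : gdist G x (Sum.inl v) a5 ≤ half :=
      half_extend h3h ((nbhd3 h0' a5).mpr (Or.inr (Or.inr rfl)))
    have hballs : ∀ Y : GadgetVert G x,
        (Y = a0 ∨ Y = a1 ∨ Y = a2 ∨ Y = a3 ∨ Y = a4 ∨ Y = a5) →
        inGball G x r T1 Y ∧ inGball G x r T2 Y ∧ inGball G x r u Y ∧
          inGball G x r Q2 Y := by
      intro Y hY
      have hYh : gdist G x (Sum.inl v) Y ≤ half := by
        rcases hY with rfl | rfl | rfl | rfl | rfl | rfl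
        exacts [h0h, h1h, h2h, h3h, h4h, h5h]
      exact ⟨ballpack hdT1 hYh hvu, ballpack hdT2 hYh hvu,
        ballpack (gdist_self u) hYh hvu, ballpack hdQ2 hYh hvu⟩
    by_cases hx2 : 0 + 1 < x s(v, q)
    · exact march hχ2 hχc u T1 T2 Q2 Q3 (Sum.inl v) a0 a1 a2 a3 a4 a5
        (Sum.inr ⟨(v, q, 0 + 1, 0), ⟨h0'.1, h0'.2.1, hx2⟩⟩)
        huT1 hT1T2 hT2u hT1Q2 hQ2Q3 hballs
        (nbhd0_first h0') (nbhd1 h0') (nbhd2 h0') (nbhd3 h0') (nbhd4 h0')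
        (fun y => by rw [nbhd5_mid h0' hx2 y]; tauto)
        (by simp [ha1def]) (by simp [ha2def])
        (by simp [ha1def, ha2def]) (by simp [ha1def, ha4def])
        (by simp [ha1def, ha5def]) (by simp [ha2def, ha3def])
        (by simp [ha2def, ha5def])
        cuT1 cuT2 cT1T2 cQ2u cQ2T2 cQ3T1 cQ3T2 cQ2Q3 hcol.symm ha0c'
    · have hlast : 0 + 1 = x s(v, q) := by have := h0'.2.2; omega
      exact march hχ2 hχc u T1 T2 Q2 Q3 (Sum.inl v) a0 a1 a2 a3 a4 a5 (Sum.inl q)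
        huT1 hT1T2 hT2u hT1Q2 hQ2Q3 hballs
        (nbhd0_first h0') (nbhd1 h0') (nbhd2 h0') (nbhd3 h0') (nbhd4 h0')
        (fun y => by rw [nbhd5_last h0' hlast y]; tauto)
        (by simp [ha1def]) (by simp [ha2def])
        (by simp [ha1def, ha2def]) (by simp [ha1def, ha4def])
        (by simp [ha1def, ha5def]) (by simp [ha2def, ha3def])
        (by simp [ha2def, ha5def])
        cuT1 cuT2 cT1T2 cQ2u cQ2T2 cQ3T1 cQ3T2 cQ2Q3 hcol.symm ha0c'
  · -- Case B : entry at vertex 5 of the last gadget of the chain (p, v)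
    have h0' : p < v ∧ G.Adj p v ∧ i < x s(p, v) := h0
    have hlast : i + 1 = x s(p, v) := by
      have h1 := h0'.2.2
      have h2 : i = x s(p, v) - 1 := hi
      omega
    have hva0' : (gadgetGraph G x).Adj (Sum.inl v) (Sum.inr ⟨(p, v, i, 5), h0'⟩) := hva0
    have ha0c' : χ (Sum.inr ⟨(p, v, i, 5), h0'⟩) = χ T1 := ha0c
    clear hva0 ha0c
    set a0 : GadgetVert G x := Sum.inr ⟨(p, v, i, 5), h0'⟩ with ha0def
    set a1 : GadgetVert G x := Sum.inr ⟨(p, v, i, 3), h0'⟩ with ha1def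
    set a2 : GadgetVert G x := Sum.inr ⟨(p, v, i, 4), h0'⟩ with ha2def
    set a3 : GadgetVert G x := Sum.inr ⟨(p, v, i, 1), h0'⟩ with ha3def
    set a4 : GadgetVert G x := Sum.inr ⟨(p, v, i, 2), h0'⟩ with ha4def
    set a5 : GadgetVert G x := Sum.inr ⟨(p, v, i, 0), h0'⟩ with ha5def
    have h0h : gdist G x (Sum.inl v) a0 ≤ half :=
      (gdist_le_wt hva0').trans_eq (wt_inl_left v a0)
    have h1h : gdist G x (Sum.inl v) a1 ≤ half :=
      half_extend h0h ((nbhd5_last h0' hlast a1).mpr (Or.inr (Or.inl rfl)))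
    have h2h : gdist G x (Sum.inl v) a2 ≤ half :=
      half_extend h0h ((nbhd5_last h0' hlast a2).mpr (Or.inr (Or.inr rfl)))
    have h3h : gdist G x (Sum.inl v) a3 ≤ half :=
      half_extend h1h ((nbhd3 h0' a3).mpr (Or.inl rfl))
    have h4h : gdist G x (Sum.inl v) a4 ≤ half :=
      half_extend h2h ((nbhd4 h0' a4).mpr (Or.inl rfl))
    have h5h : gdist G x (Sum.inl v) a5 ≤ half :=
      half_extend h3h ((nbhd1 h0' a5).mpr (Or.inl rfl))
    have hballs : ∀ Y : GadgetVert G x,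
        (Y = a0 ∨ Y = a1 ∨ Y = a2 ∨ Y = a3 ∨ Y = a4 ∨ Y = a5) →
        inGball G x r T1 Y ∧ inGball G x r T2 Y ∧ inGball G x r u Y ∧
          inGball G x r Q2 Y := by
      intro Y hY
      have hYh : gdist G x (Sum.inl v) Y ≤ half := by
        rcases hY with rfl | rfl | rfl | rfl | rfl | rfl
        exacts [h0h, h1h, h2h, h3h, h4h, h5h]
      exact ⟨ballpack hdT1 hYh hvu, ballpack hdT2 hYh hvu,
        ballpack (gdist_self u) hYh hvu, ballpack hdQ2 hYh hvu⟩
    have hn0 : ∀ y, (gadgetGraph G x).Adj a0 y ↔ y = Sum.inl v ∨ y = a1 ∨ y = a2 :=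
      nbhd5_last h0' hlast
    have hn1 : ∀ y, (gadgetGraph G x).Adj a1 y ↔ y = a0 ∨ y = a2 ∨ y = a3 :=
      fun y => by rw [nbhd3 h0' y]; tauto
    have hn2 : ∀ y, (gadgetGraph G x).Adj a2 y ↔ y = a0 ∨ y = a1 ∨ y = a4 :=
      fun y => by rw [nbhd4 h0' y]; tauto
    have hn3 : ∀ y, (gadgetGraph G x).Adj a3 y ↔ y = a1 ∨ y = a4 ∨ y = a5 :=
      fun y => by rw [nbhd1 h0' y]; tauto
    have hn4 : ∀ y, (gadgetGraph G x).Adj a4 y ↔ y = a2 ∨ y = a3 ∨ y = a5 :=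
      fun y => by rw [nbhd2 h0' y]; tauto
    rcases i with _ | i2
    · exact march hχ2 hχc u T1 T2 Q2 Q3 (Sum.inl v) a0 a1 a2 a3 a4 a5 (Sum.inl p)
        huT1 hT1T2 hT2u hT1Q2 hQ2Q3 hballs hn0 hn1 hn2 hn3 hn4
        (fun y => by rw [nbhd0_first h0' y]; tauto)
        (by simp [ha1def]) (by simp [ha2def])
        (by simp [ha1def, ha2def]) (by simp [ha1def, ha4def])
        (by simp [ha1def, ha5def]) (by simp [ha2def, ha3def])
        (by simp [ha2def, ha5def])
        cuT1 cuT2 cT1T2 cQ2u cQ2T2 cQ3T1 cQ3T2 cQ2Q3 hcol.symm ha0c'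
    · exact march hχ2 hχc u T1 T2 Q2 Q3 (Sum.inl v) a0 a1 a2 a3 a4 a5
        (Sum.inr ⟨(p, v, i2, 5), ⟨h0'.1, h0'.2.1, Nat.lt_of_succ_lt h0'.2.2⟩⟩)
        huT1 hT1T2 hT2u hT1Q2 hQ2Q3 hballs hn0 hn1 hn2 hn3 hn4
        (fun y => by rw [nbhd0_mid h0' y]; tauto)
        (by simp [ha1def]) (by simp [ha2def])
        (by simp [ha1def, ha2def]) (by simp [ha1def, ha4def])
        (by simp [ha1def, ha5def]) (by simp [ha2def, ha3def])
        (by simp [ha2def, ha5def])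
        cuT1 cuT2 cT1T2 cQ2u cQ2T2 cQ3T1 cQ3T2 cQ2Q3 hcol.symm ha0c'


set_option maxHeartbeats 1000000 in
lemma uside (hχ2 : Dist2Coloring G x χ) (hχc : EdgeConsistent G x r χ)
    {v : V} {α β : V} {k : ℕ} (hp : α < β ∧ G.Adj α β ∧ k < x s(α, β))
    (j0 t1 t2 q2 q3 : Fin 6)
    (hA1 : AAdj j0 t1 ∨ AAdj t1 j0) (hA2 : AAdj t1 t2 ∨ AAdj t2 t1)
    (hA3 : AAdj t2 j0 ∨ AAdj j0 t2) (hA4 : AAdj t1 q2 ∨ AAdj q2 t1)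
    (hA5 : AAdj q2 q3 ∨ AAdj q3 q2)
    (hA6 : (AAdj t2 q3 ∨ AAdj q3 t2) ∨ ((AAdj j0 q3 ∨ AAdj q3 j0) ∧ t2 ≠ q3))
    (nd1 : j0 ≠ q2) (nd2 : t2 ≠ q2) (nd3 : t1 ≠ q3)
    (hvu : gdist G x (Sum.inl v) (Sum.inr ⟨(α, β, k, j0), hp⟩) + half ≤ r)
    (hcol : χ (Sum.inr ⟨(α, β, k, j0), hp⟩) = χ (Sum.inl v)) : False := by
  set u : GadgetVert G x := Sum.inr ⟨(α, β, k, j0), hp⟩ with hudef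
  set T1 : GadgetVert G x := Sum.inr ⟨(α, β, k, t1), hp⟩ with hT1def
  set T2 : GadgetVert G x := Sum.inr ⟨(α, β, k, t2), hp⟩ with hT2def
  set Q2 : GadgetVert G x := Sum.inr ⟨(α, β, k, q2), hp⟩ with hQ2def
  set Q3 : GadgetVert G x := Sum.inr ⟨(α, β, k, q3), hp⟩ with hQ3def
  have mkadj : ∀ (j1 j2 : Fin 6), (AAdj j1 j2 ∨ AAdj j2 j1) →
      (gadgetGraph G x).Adj (Sum.inr ⟨(α, β, k, j1), hp⟩) (Sum.inr ⟨(α, β, k, j2), hp⟩) :=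
    fun j1 j2 hA => adj_inr_inr.mpr ⟨rfl, rfl, Or.inl ⟨rfl, hA⟩⟩
  have huT1 : (gadgetGraph G x).Adj u T1 := mkadj _ _ hA1
  have hT1T2 : (gadgetGraph G x).Adj T1 T2 := mkadj _ _ hA2
  have hT2u : (gadgetGraph G x).Adj T2 u := mkadj _ _ hA3
  have hT1Q2 : (gadgetGraph G x).Adj T1 Q2 := mkadj _ _ hA4
  have hQ2Q3 : (gadgetGraph G x).Adj Q2 Q3 := mkadj _ _ hA5
  have h6 : (gadgetGraph G x).Adj T2 Q3 ∨ ((gadgetGraph G x).Adj u Q3 ∧ T2 ≠ Q3) := by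
    rcases hA6 with hA6 | ⟨hA6, hne⟩
    · exact Or.inl (mkadj _ _ hA6)
    · refine Or.inr ⟨mkadj _ _ hA6, ?_⟩
      simp only [hT2def, hQ3def]
      simpa using hne
  obtain ⟨cuT1, cuT2, cT1T2, cQ2u, cQ2T2, cQ3T1, cQ3T2, cQ2Q3⟩ :=
    colors_setup hχ2 huT1 hT1T2 hT2u hT1Q2 hQ2Q3 h6
      (by simp only [hudef, hQ2def]; simpa using nd1)
      (by simp only [hT2def, hQ2def]; simpa using nd2)
      (by simp only [hT1def, hQ3def]; simpa using nd3)
  have hdT1 : gdist G x T1 u ≤ 0 :=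
    (gdist_le_wt huT1.symm).trans_eq (wt_inr_inr _ _)
  have hdT2 : gdist G x T2 u ≤ 0 :=
    (gdist_le_wt hT2u).trans_eq (wt_inr_inr _ _)
  have hdQ2 : gdist G x Q2 u ≤ 0 := by
    calc gdist G x Q2 u ≤ gdist G x Q2 T1 + gdist G x T1 u := gdist_triangle _ _ _
      _ ≤ 0 + 0 := add_le_add ((gdist_le_wt hT1Q2.symm).trans_eq (wt_inr_inr _ _)) hdT1
      _ = 0 := by rw [add_zero]
  exact key hχ2 hχc huT1 hT1T2 hT2u hT1Q2 hQ2Q3 hdT1 hdT2 hdQ2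
    cuT1 cuT2 cT1T2 cQ2u cQ2T2 cQ3T1 cQ3T2 cQ2Q3 hvu hcol

end march

theorem stmt3 (G : SimpleGraph V) (x : Sym2 V → ℕ) (r : ℕ) (hr : 0 < r)
    (hgad : CorrectlyGadgeted G x r)
    (χ : GadgetVert G x → ℕ)
    (hχ2 : Dist2Coloring G x χ)
    (hχc : EdgeConsistent G x r χ)
    (v : V) :
    ∀ u : GadgetVert G x, inGball G x r (Sum.inl v) u →
      (IsInner G x u ∨ IsOuter G x u) → χ u ≠ χ (Sum.inl v) := by
  intro u hball hio hcol
  have hu : ∃ p, u = Sum.inr p := hio.elim (fun h => h.1) (fun h => h.1)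
  obtain ⟨⟨⟨α, β, k, j⟩, hp⟩, rfl⟩ := hu
  have hr1 : 1 ≤ r := hr
  have hvu : gdist G x (Sum.inl v) (Sum.inr ⟨(α, β, k, j), hp⟩) + half ≤ r :=
    gdist_add_half_le hr1 hball
  fin_cases j
  · exact uside hχ2 hχc hp 0 1 2 3 4
      (by unfold AAdj; decide) (by unfold AAdj; decide) (by unfold AAdj; decide)
      (by unfold AAdj; decide) (by unfold AAdj; decide)
      (Or.inl (by unfold AAdj; decide))
      (by decide) (by decide) (by decide) hvu hcol
  · exact uside hχ2 hχc hp 1 2 0 4 3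
      (by unfold AAdj; decide) (by unfold AAdj; decide) (by unfold AAdj; decide)
      (by unfold AAdj; decide) (by unfold AAdj; decide)
      (Or.inr ⟨by unfold AAdj; decide, by decide⟩)
      (by decide) (by decide) (by decide) hvu hcol
  · exact uside hχ2 hχc hp 2 1 0 3 4
      (by unfold AAdj; decide) (by unfold AAdj; decide) (by unfold AAdj; decide)
      (by unfold AAdj; decide) (by unfold AAdj; decide)
      (Or.inr ⟨by unfold AAdj; decide, by decide⟩)
      (by decide) (by decide) (by decide) hvu hcol
  · exact uside hχ2 hχc hp 3 4 5 2 1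
      (by unfold AAdj; decide) (by unfold AAdj; decide) (by unfold AAdj; decide)
      (by unfold AAdj; decide) (by unfold AAdj; decide)
      (Or.inr ⟨by unfold AAdj; decide, by decide⟩)
      (by decide) (by decide) (by decide) hvu hcol
  · exact uside hχ2 hχc hp 4 3 5 1 2
      (by unfold AAdj; decide) (by unfold AAdj; decide) (by unfold AAdj; decide)
      (by unfold AAdj; decide) (by unfold AAdj; decide)
      (Or.inr ⟨by unfold AAdj; decide, by decide⟩)
      (by decide) (by decide) (by decide) hvu hcol
  · exact uside hχ2 hχc hp 5 4 3 2 1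
      (by unfold AAdj; decide) (by unfold AAdj; decide) (by unfold AAdj; decide)
      (by unfold AAdj; decide) (by unfold AAdj; decide)
      (Or.inl (by unfold AAdj; decide))
      (by decide) (by decide) (by decide) hvu hcol

end LCLGadgetThms
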